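/- Let (M_n, d_n), n ∈ ℕ, be a sequence of separable complete metric spaces. Then E((M_n)_{n∈ℕ}, 0) is Borel reducible to E([0,1], 0), the equivalence relation on [0,1]^ℕ defined by (x,y) ∈ E([0,1],0) iff lim_{n→∞}|x(n)−y(n)| = 0. -/

import Mathlib

open Filter Topology MeasureTheory
open scoped ENNReal NNReal

noncomputable section

/-- `E` is Borel reducible to `F`: there is a Borel (measurable) map `θ` such that
`E x y ↔ F (θ x) (θ y)` for all `x, y`. -/
def BorelReducible {α β : Type*} [MeasurableSpace α] [MeasurableSpace β]
    (E : α → α → Prop) (F : β → β → Prop) : Prop :=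
  ∃ θ : α → β, Measurable θ ∧ ∀ x y, E x y ↔ F (θ x) (θ y)

namespace EReductionAux

/-- `premin f j = min (1, min_{i<j} f i)`. -/
def premin (f : ℕ → ℝ) : ℕ → ℝ
  | 0 => 1
  | (j+1) => min (premin f j) (f j)

lemma premin_nonneg {f : ℕ → ℝ} (hf : ∀ i, 0 ≤ f i) : ∀ j, 0 ≤ premin f j
  | 0 => zero_le_one
  | (j+1) => le_min (premin_nonneg hf j) (hf j)

lemma premin_le {f : ℕ → ℝ} : ∀ {i j : ℕ}, i < j → premin f j ≤ f i := by
  intro i j h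
  induction j with
  | zero => omega
  | succ j ih =>
    rcases Nat.lt_succ_iff_lt_or_eq.mp h with h' | h'
    · exact (min_le_left _ _).trans (ih h')
    · subst h'; exact min_le_right _ _

lemma le_premin {f : ℕ → ℝ} {c : ℝ} (hc : c ≤ 1) :
    ∀ j, (∀ i < j, c ≤ f i) → c ≤ premin f j
  | 0, _ => hc
  | (j+1), h =>
      le_min (le_premin hc j fun i hi => h i (hi.trans (Nat.lt_succ_self j)))
        (h j (Nat.lt_succ_self j))

lemma premin_tendsto_zero {f : ℕ → ℝ} (hf : ∀ i, 0 ≤ f i)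
    (hd : ∀ δ > 0, ∃ i, f i < δ) : Tendsto (premin f) atTop (𝓝 0) := by
  rw [Metric.tendsto_atTop]
  intro ε hε
  obtain ⟨i, hi⟩ := hd ε hε
  refine ⟨i + 1, fun j hj => ?_⟩
  have h1 : premin f j ≤ f i := premin_le (by omega)
  have h2 : 0 ≤ premin f j := premin_nonneg hf j
  rw [Real.dist_eq, sub_zero, abs_of_nonneg h2]
  exact lt_of_le_of_lt h1 hi

lemma premin_abs_sub {f g : ℕ → ℝ} {L : ℝ} (hL : 0 ≤ L)
    (h : ∀ i, |f i - g i| ≤ L) : ∀ j, |premin f j - premin g j| ≤ L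
  | 0 => by simp only [premin]; simpa using hL
  | (j+1) => by
      have h2 := abs_min_sub_min_le_max (premin f j) (f j) (premin g j) (g j)
      exact h2.trans (max_le (premin_abs_sub hL h j) (h j))

lemma premin_continuous {α : Type*} [TopologicalSpace α] {f : ℕ → α → ℝ}
    (hf : ∀ i, Continuous (f i)) : ∀ j, Continuous fun a => premin (fun i => f i a) j
  | 0 => continuous_const
  | (j+1) => (premin_continuous hf j).min (hf j)

/-- Characterization of convergence to `0` along `cofinite` for nonnegative functions. -/
lemma tendsto_cofinite_zero_iff {ι : Type*} {h : ι → ℝ} (h0 : ∀ i, 0 ≤ h i) :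
    Tendsto h cofinite (𝓝 0) ↔ ∀ ε > 0, {i | ε ≤ h i}.Finite := by
  rw [Metric.tendsto_nhds]
  constructor
  · intro H ε hε
    have h2 := H ε hε
    rw [eventually_cofinite] at h2
    refine h2.subset fun i hi => ?_
    simp only [Set.mem_setOf_eq, Real.dist_eq, sub_zero, abs_of_nonneg (h0 i), not_lt]
    exact hi
  · intro H ε hε
    rw [eventually_cofinite]
    refine (H ε hε).subset fun i hi => ?_
    simp only [Set.mem_setOf_eq, Real.dist_eq, sub_zero, abs_of_nonneg (h0 i), not_lt] at hi
    exact hi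

lemma tendsto_atTop_zero_iff {h : ℕ → ℝ} (h0 : ∀ i, 0 ≤ h i) :
    Tendsto h atTop (𝓝 0) ↔ ∀ ε > 0, {i | ε ≤ h i}.Finite := by
  rw [← Nat.cofinite_eq_atTop]
  exact tendsto_cofinite_zero_iff h0

end EReductionAux

open EReductionAux in
theorem E_Mn_zero_reducible_E_unitInterval_zero (M : ℕ → Type*) [∀ n, MetricSpace (M n)]
    [∀ n, TopologicalSpace.SeparableSpace (M n)] [∀ n, CompleteSpace (M n)]
    [∀ n, MeasurableSpace (M n)] [∀ n, BorelSpace (M n)] :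
    BorelReducible
      (fun x y : ∀ n, M n => Tendsto (fun n => dist (x n) (y n)) atTop (𝓝 0))
      (fun x y : ℕ → (Set.Icc (0:ℝ) 1) =>
        Tendsto (fun n => |(x n : ℝ) - (y n : ℝ)|) atTop (𝓝 0)) := by
  classical
  by_cases hne : ∀ n, Nonempty (M n)
  swap
  · -- some `M n` is empty, so the whole product is empty
    simp only [not_forall] at hne
    obtain ⟨n, hn⟩ := hne
    have hemp : IsEmpty (∀ n, M n) := ⟨fun x => hn ⟨x n⟩⟩
    refine ⟨fun x => absurd ⟨x n⟩ hn, ?_, fun x => (hemp.false x).elim⟩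
    intro s _
    have h0 : (fun x : ∀ n, M n => absurd (⟨x n⟩ : Nonempty (M n)) hn) ⁻¹' s = ∅ :=
      Set.eq_empty_of_isEmpty _
    rw [h0]; exact MeasurableSet.empty
  · haveI := hne
    -- choose dense sequences
    have hp : ∀ n, ∃ u : ℕ → M n, DenseRange u := fun n =>
      TopologicalSpace.exists_dense_seq (M n)
    choose p hp using hp
    have hdense : ∀ n (u : M n), ∀ δ > 0, ∃ i, dist u (p n i) < δ := fun n u δ hδ =>
      (Metric.denseRange_iff.mp (hp n)) u δ hδ
    -- the coordinate functions
    let F : ℕ × ℕ × ℕ → (∀ n, M n) → ℝ := fun t x =>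
      min (max 0 ((1/2 : ℝ) ^ t.2.1 - dist (x t.1) (p t.1 t.2.2)))
        (premin (fun i => dist (x t.1) (p t.1 i)) t.2.2)
    have hFdef : ∀ n m j x, F (n, m, j) x =
        min (max 0 ((1/2 : ℝ) ^ m - dist (x n) (p n j)))
          (premin (fun i => dist (x n) (p n i)) j) := fun n m j x => rfl
    have hF0 : ∀ t x, 0 ≤ F t x := fun t x =>
      le_min (le_max_left _ _) (premin_nonneg (fun i => dist_nonneg) _)
    have hFscale : ∀ t x, F t x ≤ (1/2 : ℝ) ^ t.2.1 := by
      intro t x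
      refine (min_le_left _ _).trans (max_le (by positivity) ?_)
      have h1 := dist_nonneg (x := x t.1) (y := p t.1 t.2.2)
      linarith
    have hF1 : ∀ t x, F t x ≤ 1 := fun t x =>
      (hFscale t x).trans (pow_le_one₀ (by norm_num) (by norm_num))
    have hFpremin : ∀ n m j (x : ∀ n, M n),
        F (n, m, j) x ≤ premin (fun i => dist (x n) (p n i)) j :=
      fun n m j x => min_le_right _ _
    -- Lipschitz-type bound
    have hLip : ∀ t (x y : ∀ n, M n), |F t x - F t y| ≤ dist (x t.1) (y t.1) := by
      intro t x y
      have h1 : ∀ i, |dist (x t.1) (p t.1 i) - dist (y t.1) (p t.1 i)| ≤ dist (x t.1) (y t.1) :=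
        fun i => abs_dist_sub_le _ _ _
      have hA : |max 0 ((1/2 : ℝ) ^ t.2.1 - dist (x t.1) (p t.1 t.2.2)) -
          max 0 ((1/2 : ℝ) ^ t.2.1 - dist (y t.1) (p t.1 t.2.2))| ≤ dist (x t.1) (y t.1) := by
        have h3 := abs_max_sub_max_le_max (0:ℝ) ((1/2 : ℝ) ^ t.2.1 - dist (x t.1) (p t.1 t.2.2))
          0 ((1/2 : ℝ) ^ t.2.1 - dist (y t.1) (p t.1 t.2.2))
        refine h3.trans (max_le (by simpa using dist_nonneg) ?_)
        have h2 := h1 t.2.2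
        have h4 : ((1/2 : ℝ) ^ t.2.1 - dist (x t.1) (p t.1 t.2.2)) -
            ((1/2 : ℝ) ^ t.2.1 - dist (y t.1) (p t.1 t.2.2)) =
            -(dist (x t.1) (p t.1 t.2.2) - dist (y t.1) (p t.1 t.2.2)) := by ring
        rw [h4, abs_neg]
        exact h2
      have hB : |premin (fun i => dist (x t.1) (p t.1 i)) t.2.2 -
          premin (fun i => dist (y t.1) (p t.1 i)) t.2.2| ≤ dist (x t.1) (y t.1) :=
        premin_abs_sub dist_nonneg h1 t.2.2
      exact (abs_min_sub_min_le_max _ _ _ _).trans (max_le hA hB)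
    have hdiff_scale : ∀ t (x y : ∀ n, M n), |F t x - F t y| ≤ (1/2 : ℝ) ^ t.2.1 := by
      intro t x y
      rw [abs_sub_le_iff]
      constructor
      · have h1 := hFscale t x; have h2 := hF0 t y; linarith
      · have h1 := hFscale t y; have h2 := hF0 t x; linarith
    -- the bijection ℕ ≃ ℕ × ℕ × ℕ
    let e : ℕ ≃ ℕ × ℕ × ℕ := (Denumerable.eqv (ℕ × ℕ × ℕ)).symm
    -- the reduction map
    refine ⟨fun x k => ⟨F (e k) x, hF0 _ _, hF1 _ _⟩, ?_, ?_⟩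
    · -- measurability
      refine measurable_pi_lambda _ fun k => ?_
      refine Measurable.subtype_mk ?_
      have hd : ∀ i, Continuous fun x : ∀ n, M n => dist (x (e k).1) (p (e k).1 i) :=
        fun i => (continuous_apply (e k).1).dist continuous_const
      have hcont : Continuous fun x : ∀ n, M n => F (e k) x :=
        ((continuous_const.max (continuous_const.sub (hd (e k).2.2))).min
          (premin_continuous hd (e k).2.2))
      exact hcont.measurable
    · -- the reduction property
      intro x y
      have hD0 : ∀ n, 0 ≤ dist (x n) (y n) := fun n => dist_nonneg
      have hG0 : ∀ t : ℕ × ℕ × ℕ, 0 ≤ |F t x - F t y| := fun t => abs_nonneg _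
      have htarget : (Tendsto (fun k => |F (e k) x - F (e k) y|) atTop (𝓝 0)) ↔
          Tendsto (fun t : ℕ × ℕ × ℕ => |F t x - F t y|) cofinite (𝓝 0) := by
        rw [← Nat.cofinite_eq_atTop]
        constructor
        · intro h
          have h2 := h.comp (e.symm.injective.tendsto_cofinite)
          have h3 : ((fun k => |F (e k) x - F (e k) y|) ∘ e.symm) =
              fun t : ℕ × ℕ × ℕ => |F t x - F t y| := by
            funext t; simp [Function.comp]
          rwa [h3] at h2
        · intro h
          exact h.comp (e.injective.tendsto_cofinite)
      show Tendsto (fun n => dist (x n) (y n)) atTop (𝓝 0) ↔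
        Tendsto (fun k => |F (e k) x - F (e k) y|) atTop (𝓝 0)
      rw [htarget, tendsto_cofinite_zero_iff hG0, tendsto_atTop_zero_iff hD0]
      constructor
      · -- forward direction
        intro hxy ε hε
        obtain ⟨Mm, hMm⟩ : ∃ m, (1/2 : ℝ) ^ m < ε :=
          exists_pow_lt_of_lt_one hε (by norm_num)
        -- all but finitely many n have dist (x n) (y n) < ε
        have hfin : {n | ε ≤ dist (x n) (y n)}.Finite := hxy ε hε
        obtain ⟨N, hN⟩ : ∃ N, ∀ n ≥ N, dist (x n) (y n) < ε := by
          obtain ⟨N, hN⟩ := hfin.bddAbove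
          refine ⟨N + 1, fun n hn => ?_⟩
          by_contra hc
          push_neg at hc
          have h1 : n ≤ N := hN hc
          have h2 : (N : ℝ) + 1 ≤ n := by exact_mod_cast hn
          have : (n : ℝ) ≤ N := by exact_mod_cast h1
          linarith
        have hrow : ∀ n m, {j | ε ≤ |F (n, m, j) x - F (n, m, j) y|}.Finite := by
          intro n m
          have hx := premin_tendsto_zero (f := fun i => dist (x n) (p n i))
            (fun i => dist_nonneg) (hdense n (x n))
          have hy := premin_tendsto_zero (f := fun i => dist (y n) (p n i))
            (fun i => dist_nonneg) (hdense n (y n))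
          have hsum : Tendsto (fun j => premin (fun i => dist (x n) (p n i)) j +
              premin (fun i => dist (y n) (p n i)) j) atTop (𝓝 0) := by
            simpa using hx.add hy
          have htend : Tendsto (fun j => |F (n, m, j) x - F (n, m, j) y|) atTop (𝓝 0) := by
            refine squeeze_zero (fun j => abs_nonneg _) (fun j => ?_) hsum
            have h1 : F (n, m, j) x ≤ premin (fun i => dist (x n) (p n i)) j :=
              hFpremin n m j x
            have h2 : F (n, m, j) y ≤ premin (fun i => dist (y n) (p n i)) j :=
              hFpremin n m j y
            have h3 : (0:ℝ) ≤ F (n, m, j) x := hF0 _ _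
            have h4 : (0:ℝ) ≤ F (n, m, j) y := hF0 _ _
            have h5 : (0:ℝ) ≤ premin (fun i => dist (x n) (p n i)) j :=
              premin_nonneg (fun i => dist_nonneg) j
            have h6 : (0:ℝ) ≤ premin (fun i => dist (y n) (p n i)) j :=
              premin_nonneg (fun i => dist_nonneg) j
            rw [abs_sub_le_iff]
            constructor <;> linarith
          exact (tendsto_atTop_zero_iff (fun j => abs_nonneg _)).mp htend ε hε
        refine Set.Finite.subset (Set.Finite.biUnion (Finset.range N).finite_toSet
          (fun n _ => Set.Finite.biUnion (Finset.range Mm).finite_toSet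
            (fun m _ => (hrow n m).image (fun j => ((n, m, j) : ℕ × ℕ × ℕ))))) ?_
        rintro ⟨n, m, j⟩ ht
        have htval : ε ≤ |F (n, m, j) x - F (n, m, j) y| := ht
        have hn : n < N := by
          by_contra hc
          push_neg at hc
          have h1 := (hLip (n, m, j) x y).trans_lt (hN n hc)
          exact absurd htval (not_le.mpr h1)
        have hm : m < Mm := by
          by_contra hc
          push_neg at hc
          have h1 : (1/2 : ℝ) ^ m ≤ (1/2 : ℝ) ^ Mm :=
            pow_le_pow_of_le_one (by norm_num) (by norm_num) hc
          have h2 : |F (n, m, j) x - F (n, m, j) y| < ε :=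
            lt_of_le_of_lt (hdiff_scale (n, m, j) x y) (h1.trans_lt hMm)
          exact absurd htval (not_le.mpr h2)
        simp only [Set.mem_iUnion, Finset.coe_range, Set.mem_Iio, Set.mem_image,
          Set.mem_setOf_eq]
        exact ⟨n, hn, m, hm, j, htval, rfl⟩
      · -- backward direction
        intro hg ε hε
        have hε'pos : (0:ℝ) < min ε 1 := lt_min hε one_pos
        have hε'le : min ε 1 ≤ ε := min_le_left _ _
        have hε'1 : min ε 1 ≤ 1 := min_le_right _ _
        obtain ⟨m, hm⟩ : ∃ m, (1/2 : ℝ) ^ m < min ε 1 / 2 :=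
          exists_pow_lt_of_lt_one (by positivity) (by norm_num)
        have hs0 : (0:ℝ) < (1/2 : ℝ) ^ m := by positivity
        have hs1 : (1/2 : ℝ) ^ m ≤ 1 := pow_le_one₀ (by norm_num) (by norm_num)
        have hs2 : 2 * (1/2 : ℝ) ^ m < min ε 1 := by linarith
        -- the least witness index
        have hexists : ∀ n, ∃ j, dist (x n) (p n j) < (1/2 : ℝ) ^ m / 8 :=
          fun n => hdense n (x n) ((1/2 : ℝ) ^ m / 8) (by positivity)
        have key : ∀ n, ε ≤ dist (x n) (y n) →
            (1/2 : ℝ) ^ m / 8 ≤ |F (n, m, Nat.find (hexists n)) x -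
              F (n, m, Nat.find (hexists n)) y| := by
          intro n hn
          have hdx : dist (x n) (p n (Nat.find (hexists n))) < (1/2 : ℝ) ^ m / 8 :=
            Nat.find_spec (hexists n)
          have hminw : ∀ i < Nat.find (hexists n),
              (1/2 : ℝ) ^ m / 8 ≤ dist (x n) (p n i) := by
            intro i hi
            have h1 := Nat.find_min (hexists n) hi
            linarith [not_lt.mp h1]
          -- lower bound for F at x
          have hFx : (1/2 : ℝ) ^ m / 8 ≤ F (n, m, Nat.find (hexists n)) x := by
            rw [hFdef]
            refine le_min (le_max_of_le_right (by linarith)) ?_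
            exact le_premin (by linarith) _ hminw
          -- F at y vanishes
          have hDn : min ε 1 ≤ dist (x n) (y n) := hε'le.trans hn
          have hdy : (1/2 : ℝ) ^ m ≤ dist (y n) (p n (Nat.find (hexists n))) := by
            have htri : dist (x n) (y n) ≤ dist (x n) (p n (Nat.find (hexists n))) +
                dist (p n (Nat.find (hexists n))) (y n) := dist_triangle _ _ _
            rw [dist_comm (p n (Nat.find (hexists n))) (y n)] at htri
            linarith
          have hFy : F (n, m, Nat.find (hexists n)) y = 0 := by
            rw [hFdef]
            have h1 : max 0 ((1/2 : ℝ) ^ m - dist (y n) (p n (Nat.find (hexists n)))) = 0 := by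
              rw [max_eq_left]
              linarith
            have h2 : (0:ℝ) ≤ premin (fun i => dist (y n) (p n i)) (Nat.find (hexists n)) :=
              premin_nonneg (fun i => dist_nonneg) _
            rw [h1, min_eq_left h2]
          rw [hFy, sub_zero, abs_of_nonneg (hF0 _ _)]
          exact hFx
        have hsub : {n | ε ≤ dist (x n) (y n)} ⊆
            Prod.fst '' {t : ℕ × ℕ × ℕ | (1/2 : ℝ) ^ m / 8 ≤ |F t x - F t y|} := by
          intro n hn
          exact ⟨(n, m, Nat.find (hexists n)), key n hn, rfl⟩
        exact ((hg ((1/2 : ℝ) ^ m / 8) (by positivity)).image Prod.fst).subset hsub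

end
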